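/- As f → +∞, f·M₀(f) = 1 + (1/f²)·∫₀¹ (φ'(x))² dx + O(1/f³); that is, f·M₀(f) − 1 − (1/f²)·∫₀¹ (φ'(x))² dx is O(f⁻³) as f → +∞. -/

import Mathlib

open MeasureTheory intervalIntegral Asymptotics Filter

noncomputable def w0 (φ : ℝ → ℝ) (f x : ℝ) : ℝ :=
  ∫ s in (0:ℝ)..1, Real.exp (φ (x + s) - φ x - f * s)

noncomputable def M0 (φ : ℝ → ℝ) (f : ℝ) : ℝ := ∫ x in (0:ℝ)..1, w0 φ f x

noncomputable def w1 (φ : ℝ → ℝ) (f x : ℝ) : ℝ :=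
  ∫ s in (0:ℝ)..1, (w0 φ f (x + s)) ^ 2 * Real.exp (φ (x + s) - φ x - f * s)

noncomputable def M1 (φ : ℝ → ℝ) (f : ℝ) : ℝ := ∫ x in (0:ℝ)..1, w1 φ f x

open Real

noncomputable def psi3 (φ : ℝ → ℝ) : ℝ → ℝ :=
  fun y => deriv (deriv (deriv φ)) y + 3 * deriv (deriv φ) y * deriv φ y + (deriv φ y)^3

lemma key1 (φ : ℝ → ℝ) (hφ : ContDiff ℝ 3 φ) (hφper : ∀ x, φ (x + 1) = φ x)
    (f : ℝ) (hf : f ≠ 0) (x : ℝ) :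
    w0 φ f x = (1 - Real.exp (-f)) *
        (1/f + deriv φ x / f^2 + (deriv (deriv φ) x + (deriv φ x)^2) / f^3)
      + (1/f^3) * ∫ s in (0:ℝ)..1, psi3 φ (x+s) * Real.exp (φ (x+s) - φ x - f*s) := by
  -- smoothness facts
  have h3 : ContDiff ℝ (2+1) φ := by norm_num; exact hφ
  have hφ2 : ContDiff ℝ 2 (deriv φ) := (contDiff_succ_iff_deriv.mp h3).2.2
  have h2 : ContDiff ℝ (1+1) (deriv φ) := by norm_num; exact hφ2
  have hφ3 : ContDiff ℝ 1 (deriv (deriv φ)) := (contDiff_succ_iff_deriv.mp h2).2.2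
  have hd0 : Differentiable ℝ φ := hφ.differentiable (by norm_num)
  have hd1 : Differentiable ℝ (deriv φ) := hφ2.differentiable (by norm_num)
  have hd2 : Differentiable ℝ (deriv (deriv φ)) := hφ3.differentiable (by norm_num)
  have hc1 : Continuous (deriv φ) := hd1.continuous
  have hc2 : Continuous (deriv (deriv φ)) := hd2.continuous
  have hc3 : Continuous (deriv (deriv (deriv φ))) := hφ3.continuous_deriv (by norm_num)
  -- periodicity of derivatives
  have hper1 : ∀ y, deriv φ (y+1) = deriv φ y := by
    intro y
    have h : (fun z => φ (z+1)) = φ := funext hφper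
    rw [← deriv_comp_add_const φ 1 y, h]
  have hper2 : ∀ y, deriv (deriv φ) (y+1) = deriv (deriv φ) y := by
    intro y
    have h : (fun z => deriv φ (z+1)) = deriv φ := funext hper1
    rw [← deriv_comp_add_const (deriv φ) 1 y, h]
  set φ1 := deriv φ with hφ1def
  set φ2 := deriv (deriv φ) with hφ2def
  set φ3 := deriv (deriv (deriv φ)) with hφ3def
  set E : ℝ → ℝ := fun s => Real.exp (φ (x+s) - φ x - f*s) with hEdef
  have hcE : Continuous E := by
    apply Real.continuous_exp.comp
    exact ((hd0.continuous.comp (continuous_const.add continuous_id)).sub continuous_const).sub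
      (continuous_const.mul continuous_id)
  have hE : ∀ s, HasDerivAt E ((φ1 (x+s) - f) * E s) s := by
    intro s
    have h1 : HasDerivAt (fun s : ℝ => x + s) 1 s := (hasDerivAt_id s).const_add x
    have h2 : HasDerivAt (fun s : ℝ => φ (x+s)) (φ1 (x+s)) s := by
      have := ((hd0 (x+s)).hasDerivAt).comp s h1
      rw [mul_one] at this
      exact this
    have h3 : HasDerivAt (fun s : ℝ => φ (x+s) - φ x - f*s) (φ1 (x+s) - f) s := by
      have := (h2.sub_const (φ x)).sub ((hasDerivAt_id s).const_mul f)
      rw [mul_one] at this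
      exact this
    simpa [mul_comm] using h3.exp
  have hD1 : ∀ s : ℝ, HasDerivAt (fun s : ℝ => φ1 (x+s)) (φ2 (x+s)) s := by
    intro s
    have h1 : HasDerivAt (fun s : ℝ => x + s) 1 s := (hasDerivAt_id s).const_add x
    have := ((hd1 (x+s)).hasDerivAt).comp s h1
    rw [mul_one] at this
    exact this
  have hD2 : ∀ s : ℝ, HasDerivAt (fun s : ℝ => φ2 (x+s)) (φ3 (x+s)) s := by
    intro s
    have h1 : HasDerivAt (fun s : ℝ => x + s) 1 s := (hasDerivAt_id s).const_add x
    have := ((hd2 (x+s)).hasDerivAt).comp s h1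
    rw [mul_one] at this
    exact this
  set A : ℝ → ℝ := fun s => 1 + φ1 (x+s)/f + (φ2 (x+s) + (φ1 (x+s))^2)/f^2 with hAdef
  have hA : ∀ s, HasDerivAt A (φ2 (x+s)/f + (φ3 (x+s) + 2*φ1 (x+s)*φ2 (x+s))/f^2) s := by
    intro s
    have h1 : HasDerivAt (fun s : ℝ => 1 + φ1 (x+s)/f) (φ2 (x+s)/f) s :=
      ((hD1 s).div_const f).const_add 1
    have h2 : HasDerivAt (fun s : ℝ => (φ1 (x+s))^2) (2*φ1 (x+s)*φ2 (x+s)) s := by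
      have := (hD1 s).mul (hD1 s)
      have e : (fun s : ℝ => (φ1 (x+s))^2) = (fun s => φ1 (x+s)) * (fun s => φ1 (x+s)) := by
        funext y; simp only [Pi.mul_apply]; ring
      rw [e, show 2*φ1 (x+s)*φ2 (x+s) = φ2 (x+s) * φ1 (x+s) + φ1 (x+s) * φ2 (x+s) by ring]
      exact this
    have h3 : HasDerivAt (fun s : ℝ => (φ2 (x+s) + (φ1 (x+s))^2)/f^2)
        ((φ3 (x+s) + 2*φ1 (x+s)*φ2 (x+s))/f^2) s := ((hD2 s).add h2).div_const (f^2)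
    exact h1.add h3
  set P : ℝ → ℝ := fun s => -(1/f) * (A s * E s) with hPdef
  have hP : ∀ s, HasDerivAt P (E s - (psi3 φ (x+s) * E s)/f^3) s := by
    intro s
    have h := ((hA s).mul (hE s)).const_mul (-(1/f))
    convert h using 1
    · rfl
    · rfl
    · rfl
    simp only [psi3, ← hφ1def, ← hφ2def, ← hφ3def, hAdef]
    field_simp
    ring
  have hcψ : Continuous (psi3 φ) := by
    show Continuous fun y => φ3 y + 3 * φ2 y * φ1 y + (φ1 y)^3
    exact (hc3.add ((continuous_const.mul hc2).mul hc1)).add (hc1.pow 3)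
  have hcψx : Continuous (fun s : ℝ => psi3 φ (x + s)) :=
    hcψ.comp (continuous_const.add continuous_id)
  have hcψE : Continuous (fun s : ℝ => psi3 φ (x+s) * E s) := hcψx.mul hcE
  have hcont : Continuous (fun s => E s - (psi3 φ (x+s) * E s)/f^3) :=
    hcE.sub (hcψE.div_const _)
  have hFTC : ∫ s in (0:ℝ)..1, (E s - (psi3 φ (x+s) * E s)/f^3) = P 1 - P 0 :=
    integral_eq_sub_of_hasDerivAt (fun s _ => hP s) (hcont.intervalIntegrable 0 1)
  have hsplit : ∫ s in (0:ℝ)..1, (E s - (psi3 φ (x+s) * E s)/f^3)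
      = w0 φ f x - (∫ s in (0:ℝ)..1, psi3 φ (x+s) * E s)/f^3 := by
    rw [intervalIntegral.integral_sub (hcE.intervalIntegrable 0 1)
      ((hcψE.div_const _).intervalIntegrable 0 1), intervalIntegral.integral_div]
    rfl
  have hE1 : E 1 = Real.exp (-f) := by
    simp only [hEdef, hφper x, mul_one]
    ring_nf
  have hE0 : E 0 = 1 := by simp [hEdef]
  have hPval : P 1 - P 0 = (1 - Real.exp (-f)) *
      (1/f + φ1 x / f^2 + (φ2 x + (φ1 x)^2) / f^3) := by
    simp only [hPdef, hAdef, hE1, hE0, hper1 x, hper2 x]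
    field_simp
    ring
  have := hsplit.symm.trans (hFTC.trans hPval)
  have hrw : w0 φ f x = (1 - Real.exp (-f)) *
      (1/f + φ1 x / f^2 + (φ2 x + (φ1 x)^2) / f^3)
      + (∫ s in (0:ℝ)..1, psi3 φ (x+s) * E s)/f^3 := by linarith
  rw [hrw]; ring

lemma key2 (φ : ℝ → ℝ) (hφ : ContDiff ℝ 3 φ) (hφper : ∀ x, φ (x + 1) = φ x)
    (f : ℝ) (hf : f ≠ 0) :
    f * M0 φ f = (1 - Real.exp (-f)) * (1 + (∫ x in (0:ℝ)..1, (deriv φ x)^2)/f^2)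
      + (1/f^2) * ∫ x in (0:ℝ)..1,
          ∫ s in (0:ℝ)..1, psi3 φ (x+s) * Real.exp (φ (x+s) - φ x - f*s) := by
  have h3 : ContDiff ℝ (2+1) φ := by norm_num; exact hφ
  have hφ2 : ContDiff ℝ 2 (deriv φ) := (contDiff_succ_iff_deriv.mp h3).2.2
  have h2 : ContDiff ℝ (1+1) (deriv φ) := by norm_num; exact hφ2
  have hφ3 : ContDiff ℝ 1 (deriv (deriv φ)) := (contDiff_succ_iff_deriv.mp h2).2.2
  have hd0 : Differentiable ℝ φ := hφ.differentiable (by norm_num)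
  have hd1 : Differentiable ℝ (deriv φ) := hφ2.differentiable (by norm_num)
  have hd2 : Differentiable ℝ (deriv (deriv φ)) := hφ3.differentiable (by norm_num)
  have hc1 : Continuous (deriv φ) := hd1.continuous
  have hc2 : Continuous (deriv (deriv φ)) := hd2.continuous
  have hc3 : Continuous (deriv (deriv (deriv φ))) := hφ3.continuous_deriv (by norm_num)
  have hper1 : ∀ y, deriv φ (y+1) = deriv φ y := by
    intro y
    have h : (fun z => φ (z+1)) = φ := funext hφper
    rw [← deriv_comp_add_const φ 1 y, h]
  have hcψ : Continuous (psi3 φ) := by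
    show Continuous fun y => deriv (deriv (deriv φ)) y + 3 * deriv (deriv φ) y * deriv φ y
      + (deriv φ y)^3
    exact (hc3.add ((continuous_const.mul hc2).mul hc1)).add (hc1.pow 3)
  -- the remainder function of x
  set R : ℝ → ℝ := fun x => ∫ s in (0:ℝ)..1, psi3 φ (x+s) * Real.exp (φ (x+s) - φ x - f*s)
    with hRdef
  have hcR : Continuous R := by
    apply intervalIntegral.continuous_parametric_intervalIntegral_of_continuous'
    show Continuous fun p : ℝ × ℝ => psi3 φ (p.1+p.2) * Real.exp (φ (p.1+p.2) - φ p.1 - f*p.2)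
    have hadd : Continuous fun p : ℝ × ℝ => p.1 + p.2 := continuous_fst.add continuous_snd
    exact (hcψ.comp hadd).mul (Real.continuous_exp.comp
      (((hd0.continuous.comp hadd).sub (hd0.continuous.comp continuous_fst)).sub
        (continuous_const.mul continuous_snd)))
  -- the main-term function of x
  set g : ℝ → ℝ := fun x => (1 - Real.exp (-f)) *
      (1/f + deriv φ x / f^2 + (deriv (deriv φ) x + (deriv φ x)^2) / f^3) with hgdef
  have hcg : Continuous g :=
    continuous_const.mul ((continuous_const.add (hc1.div_const _)).add
      (((hc2.add (hc1.pow 2)).div_const _)))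
  have hM : M0 φ f = (∫ x in (0:ℝ)..1, g x) + (1/f^3) * ∫ x in (0:ℝ)..1, R x := by
    have : M0 φ f = ∫ x in (0:ℝ)..1, (g x + (1/f^3) * R x) := by
      unfold M0
      apply intervalIntegral.integral_congr
      intro x _
      exact key1 φ hφ hφper f hf x
    rw [this, intervalIntegral.integral_add (hcg.intervalIntegrable 0 1)
      ((hcR.intervalIntegrable 0 1).const_mul (1/f^3))]
    simp only [intervalIntegral.integral_const_mul]
  have hint1 : ∫ x in (0:ℝ)..1, deriv φ x = 0 := by
    rw [intervalIntegral.integral_deriv_eq_sub (fun x _ => hd0 x) (hc1.intervalIntegrable 0 1)]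
    have : φ 1 = φ 0 := by simpa using hφper 0
    simp [this]
  have hint2 : ∫ x in (0:ℝ)..1, deriv (deriv φ) x = 0 := by
    rw [intervalIntegral.integral_deriv_eq_sub (fun x _ => hd1 x) (hc2.intervalIntegrable 0 1)]
    have : deriv φ 1 = deriv φ 0 := by simpa using hper1 0
    simp [this]
  have hintg : ∫ x in (0:ℝ)..1, g x
      = (1 - Real.exp (-f)) * (1/f + (∫ x in (0:ℝ)..1, (deriv φ x)^2)/f^3) := by
    rw [hgdef]
    rw [intervalIntegral.integral_const_mul]
    congr 1
    have i1 : IntervalIntegrable (fun x : ℝ => 1/f) volume 0 1 :=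
      (continuous_const).intervalIntegrable 0 1
    have i2 : IntervalIntegrable (fun x : ℝ => deriv φ x / f^2) volume 0 1 :=
      (hc1.div_const _).intervalIntegrable 0 1
    have i3 : IntervalIntegrable (fun x : ℝ => (deriv (deriv φ) x + deriv φ x ^2) / f^3) volume 0 1 :=
      ((hc2.add (hc1.pow 2)).div_const _).intervalIntegrable 0 1
    rw [intervalIntegral.integral_add (i1.add i2) i3,
      intervalIntegral.integral_add i1 i2,
      intervalIntegral.integral_div, intervalIntegral.integral_div,
      intervalIntegral.integral_div, hint1,
      intervalIntegral.integral_add ((hc2.intervalIntegrable 0 1)) (((show Continuous (fun x => deriv φ x ^ 2) from hc1.pow 2).intervalIntegrable 0 1)),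
      hint2]
    simp
  rw [hM, hintg]
  field_simp

lemma bdd_of_per (g : ℝ → ℝ) (hg : Continuous g) (hper : ∀ x, g (x+1) = g x) :
    ∃ C, 0 ≤ C ∧ ∀ y, |g y| ≤ C := by
  have hp : Function.Periodic g 1 := hper
  have hb := hp.isBounded_of_continuous one_ne_zero hg
  rcases isBounded_iff_forall_norm_le.mp hb with ⟨C, hC⟩
  exact ⟨max C 0, le_max_right _ _, fun y => le_trans (hC _ ⟨y, rfl⟩) (le_max_left _ _)⟩

/-- As `f → +∞`,
`f·M₀(f) = 1 + (1/f²)·∫₀¹ (φ'(x))² dx + O(1/f³)`. -/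
theorem stmt_15 (φ : ℝ → ℝ) (hφ : ContDiff ℝ 3 φ) (hφper : ∀ x, φ (x + 1) = φ x) :
    (fun f => f * M0 φ f - 1 - (1 / f ^ 2) * ∫ x in (0:ℝ)..1, (deriv φ x) ^ 2)
      =O[atTop] (fun f => 1 / f ^ 3) := by
  -- smoothness and periodicity facts
  have h3 : ContDiff ℝ (2+1) φ := by norm_num; exact hφ
  have hφ2 : ContDiff ℝ 2 (deriv φ) := (contDiff_succ_iff_deriv.mp h3).2.2
  have h2 : ContDiff ℝ (1+1) (deriv φ) := by norm_num; exact hφ2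
  have hφ3 : ContDiff ℝ 1 (deriv (deriv φ)) := (contDiff_succ_iff_deriv.mp h2).2.2
  have hd0 : Differentiable ℝ φ := hφ.differentiable (by norm_num)
  have hd1 : Differentiable ℝ (deriv φ) := hφ2.differentiable (by norm_num)
  have hd2 : Differentiable ℝ (deriv (deriv φ)) := hφ3.differentiable (by norm_num)
  have hc1 : Continuous (deriv φ) := hd1.continuous
  have hc2 : Continuous (deriv (deriv φ)) := hd2.continuous
  have hc3 : Continuous (deriv (deriv (deriv φ))) := hφ3.continuous_deriv (by norm_num)
  have hper1 : ∀ y, deriv φ (y+1) = deriv φ y := by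
    intro y
    have h : (fun z => φ (z+1)) = φ := funext hφper
    rw [← deriv_comp_add_const φ 1 y, h]
  have hper2 : ∀ y, deriv (deriv φ) (y+1) = deriv (deriv φ) y := by
    intro y
    have h : (fun z => deriv φ (z+1)) = deriv φ := funext hper1
    rw [← deriv_comp_add_const (deriv φ) 1 y, h]
  have hper3 : ∀ y, deriv (deriv (deriv φ)) (y+1) = deriv (deriv (deriv φ)) y := by
    intro y
    have h : (fun z => deriv (deriv φ) (z+1)) = deriv (deriv φ) := funext hper2
    rw [← deriv_comp_add_const (deriv (deriv φ)) 1 y, h]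
  have hcψ : Continuous (psi3 φ) := by
    show Continuous fun y => deriv (deriv (deriv φ)) y + 3 * deriv (deriv φ) y * deriv φ y
      + (deriv φ y)^3
    exact (hc3.add ((continuous_const.mul hc2).mul hc1)).add (hc1.pow 3)
  have hperψ : ∀ y, psi3 φ (y+1) = psi3 φ y := by
    intro y; unfold psi3; rw [hper1, hper2, hper3]
  -- bounds
  obtain ⟨Bφ, hBφ0, hBφ⟩ := bdd_of_per φ hd0.continuous hφper
  obtain ⟨Bψ, hBψ0, hBψ⟩ := bdd_of_per (psi3 φ) hcψ hperψ
  set K := Bψ * Real.exp (2*Bφ) with hKdef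
  have hK0 : 0 ≤ K := mul_nonneg hBψ0 (Real.exp_pos _).le
  set c := ∫ x in (0:ℝ)..1, (deriv φ x)^2 with hcdef
  -- remainder bound: for f > 0, the double integral is ≤ K / f
  have hRbound : ∀ f : ℝ, 0 < f →
      |∫ x in (0:ℝ)..1, ∫ s in (0:ℝ)..1,
          psi3 φ (x+s) * Real.exp (φ (x+s) - φ x - f*s)| ≤ K / f := by
    intro f hf
    have hinner : ∀ x : ℝ, |∫ s in (0:ℝ)..1,
        psi3 φ (x+s) * Real.exp (φ (x+s) - φ x - f*s)| ≤ K / f := by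
      intro x
      have hptwise : ∀ s ∈ Set.Ioc (0:ℝ) 1,
          ‖psi3 φ (x+s) * Real.exp (φ (x+s) - φ x - f*s)‖ ≤ K * Real.exp (-f*s) := by
        intro s _
        rw [norm_mul, Real.norm_eq_abs, Real.norm_eq_abs, abs_exp]
        have h1 : |psi3 φ (x+s)| ≤ Bψ := hBψ _
        have h2 : Real.exp (φ (x+s) - φ x - f*s) ≤ Real.exp (2*Bφ) * Real.exp (-f*s) := by
          rw [← Real.exp_add]
          apply Real.exp_le_exp.mpr
          have := hBφ (x+s); have := hBφ x
          have h1 := abs_le.mp (hBφ (x+s)); have h2 := abs_le.mp (hBφ x)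
          linarith
        calc |psi3 φ (x+s)| * Real.exp (φ (x+s) - φ x - f*s)
            ≤ Bψ * (Real.exp (2*Bφ) * Real.exp (-f*s)) := by
              apply mul_le_mul h1 h2 (Real.exp_pos _).le hBψ0
          _ = K * Real.exp (-f*s) := by rw [hKdef]; ring
      have hexpint : ∫ s in (0:ℝ)..1, K * Real.exp (-f*s)
          = K/f * (1 - Real.exp (-f)) := by
        have hQ : ∀ s : ℝ, HasDerivAt (fun s => -(K/f) * Real.exp (-f*s))
            (K * Real.exp (-f*s)) s := by
          intro s
          have h1 : HasDerivAt (fun s : ℝ => -f*s) (-f) s := by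
            simpa using (hasDerivAt_id s).const_mul (-f)
          have := (h1.exp).const_mul (-(K/f))
          convert this using 1
          · rfl
          · rfl
          field_simp
        rw [integral_eq_sub_of_hasDerivAt (fun s _ => hQ s)
          ((continuous_const.mul (Real.continuous_exp.comp
            (continuous_const.mul continuous_id))).intervalIntegrable 0 1)]
        simp only [mul_one, mul_zero, Real.exp_zero]
        field_simp
        ring
      have hae : ∀ᵐ t ∂(volume.restrict (Set.uIoc (0:ℝ) 1)),
          ‖psi3 φ (x+t) * Real.exp (φ (x+t) - φ x - f*t)‖ ≤ K * Real.exp (-f*t) := by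
        rw [MeasureTheory.ae_restrict_iff' measurableSet_uIoc]
        exact Eventually.of_forall fun s hs =>
          hptwise s (by simpa [Set.uIoc_of_le (by norm_num : (0:ℝ) ≤ 1)] using hs)
      have h := intervalIntegral.norm_integral_le_of_norm_le
        (f := fun s => psi3 φ (x+s) * Real.exp (φ (x+s) - φ x - f*s)) (μ := volume) (by norm_num : (0:ℝ) ≤ 1)
        (Eventually.of_forall hptwise)
        ((continuous_const.mul (Real.continuous_exp.comp
            (continuous_const.mul continuous_id))).intervalIntegrable 0 1)
      rw [hexpint] at h
      rw [← Real.norm_eq_abs]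
      refine h.trans ?_
      have he1 : Real.exp (-f) ≤ 1 := Real.exp_le_one_iff.mpr (by linarith)
      have he0 : (0:ℝ) ≤ Real.exp (-f) := (Real.exp_pos _).le
      have hKf : 0 ≤ K/f := div_nonneg hK0 hf.le
      nlinarith
    rw [← Real.norm_eq_abs]
    calc ‖∫ x in (0:ℝ)..1, ∫ s in (0:ℝ)..1, psi3 φ (x+s) * Real.exp (φ (x+s) - φ x - f*s)‖
        ≤ (K/f) * |1 - 0| := intervalIntegral.norm_integral_le_of_norm_le_const
          (fun x _ => by rw [Real.norm_eq_abs]; exact hinner x)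
      _ = K/f := by norm_num
  -- final assembly
  rw [Asymptotics.isBigO_iff]
  refine ⟨(1 + |c|) + K, ?_⟩
  have hev2 : ∀ᶠ f : ℝ in atTop, f^3 * Real.exp (-f) ≤ 1 :=
    (Real.tendsto_pow_mul_exp_neg_atTop_nhds_zero 3).eventually (eventually_le_nhds one_pos)
  filter_upwards [eventually_ge_atTop (1:ℝ), hev2] with f hf1 hf2
  have hf0 : (0:ℝ) < f := by linarith
  have hfne : f ≠ 0 := ne_of_gt hf0
  have hT := hRbound f hf0
  rw [key2 φ hφ hφper f hfne]
  set T := ∫ x in (0:ℝ)..1, ∫ s in (0:ℝ)..1,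
      psi3 φ (x+s) * Real.exp (φ (x+s) - φ x - f*s) with hTdef
  have heq : (1 - Real.exp (-f)) * (1 + c/f^2) + (1/f^2) * T - 1 - (1/f^2) * c
      = -(Real.exp (-f) * (1 + c/f^2)) + (1/f^2) * T := by ring
  rw [heq]
  have habs1 : |1 + c/f^2| ≤ 1 + |c| := by
    have hf2ge : (1:ℝ) ≤ f^2 := one_le_pow₀ hf1
    have : |c|/f^2 ≤ |c| := by
      apply div_le_self (abs_nonneg c) hf2ge
    calc |1 + c/f^2| ≤ |(1:ℝ)| + |c/f^2| := abs_add_le _ _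
      _ = 1 + |c|/f^2 := by rw [abs_one, abs_div, abs_of_pos (pow_pos hf0 2)]
      _ ≤ 1 + |c| := by linarith
  have h1 : |(-(Real.exp (-f) * (1 + c/f^2)) + (1/f^2) * T)|
      ≤ Real.exp (-f) * (1+|c|) + (1/f^2)*(K/f) := by
    calc |(-(Real.exp (-f) * (1 + c/f^2)) + (1/f^2) * T)|
        ≤ |(-(Real.exp (-f) * (1 + c/f^2)))| + |(1/f^2)*T| := abs_add_le _ _
      _ = Real.exp (-f) * |1 + c/f^2| + (1/f^2) * |T| := by
          rw [abs_neg, abs_mul, abs_mul, abs_of_pos (Real.exp_pos _),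
            abs_of_pos (show (0:ℝ) < 1/f^2 by positivity)]
      _ ≤ Real.exp (-f) * (1+|c|) + (1/f^2) * (K/f) := by
          gcongr
  have h2 : Real.exp (-f) ≤ 1/f^3 := by
    rw [le_div_iff₀ (pow_pos hf0 3)]
    nlinarith
  have h3 : Real.exp (-f) * (1+|c|) ≤ (1/f^3) * (1+|c|) :=
    mul_le_mul_of_nonneg_right h2 (by positivity)
  rw [Real.norm_eq_abs, Real.norm_eq_abs, abs_of_pos (show (0:ℝ) < 1/f^3 by positivity)]
  refine le_trans h1 ?_
  calc Real.exp (-f)*(1+|c|) + (1/f^2)*(K/f)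
      ≤ (1/f^3)*(1+|c|) + (1/f^2)*(K/f) := by linarith
    _ = ((1+|c|)+K) * (1/f^3) := by field_simp
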